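/- arXiv:2304.01998 — 4 statements merged into one kernel-verified Lean document; each statement's English description precedes it below -/
import Mathlib

section
/- For every n ≥ 1 and every I ⊆ {1,…,n}, D_I = Σ_T (−1)^{|T|} · (n+1)! / ∏_{B ∈ T} (|B|+1)!, where the sum ranges over all sets T of contiguous blocks of I (including the empty set and the set of all blocks of I). -/
set_option maxHeartbeats 1000000
set_option maxRecDepth 4000


noncomputable section

open scoped Classical

/-- `B` is a contiguous block of `I ⊆ {1, …, n}` (subsets of `{1, …, n}` are modelled
as `Finset (Fin n)`): a maximal subset of `I` consisting of consecutive integers. -/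
def IsBlock {n : ℕ} (I B : Finset (Fin n)) : Prop :=
  ∃ a b : Fin n, a ≤ b ∧ B = Finset.Icc a b ∧ B ⊆ I ∧
    (∀ c : Fin n, (c : ℕ) + 1 = (a : ℕ) → c ∉ I) ∧
    (∀ c : Fin n, (b : ℕ) + 1 = (c : ℕ) → c ∉ I)

/-- The set of contiguous blocks of `I`. -/
noncomputable def blocksOf {n : ℕ} (I : Finset (Fin n)) : Finset (Finset (Fin n)) :=
  I.powerset.filter (fun B => IsBlock I B)

/-- `n_i(I)`: the number of contiguous blocks of `I` of size `i`. -/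
noncomputable def nBlocks {n : ℕ} (I : Finset (Fin n)) (i : ℕ) : ℕ :=
  ((blocksOf I).filter (fun B => B.card = i)).card

/-- `N_I = (n+1 − Σ_i (i+1)·n_i(I))! · ∏_i ( n_i(I)! · ((i+1)!)^{n_i(I)} )`. -/
noncomputable def NIval {n : ℕ} (I : Finset (Fin n)) : ℕ :=
  Nat.factorial (n + 1 - ∑ i ∈ Finset.range (n + 1), (i + 1) * nBlocks I i) *
    ∏ i ∈ Finset.range (n + 1),
      Nat.factorial (nBlocks I i) * Nat.factorial (i + 1) ^ nBlocks I i

/-- `j` is a descent of the permutation `w` of `{1, …, n+1}` (positions are indexed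
by `Fin (n+1)`, the simple reflections `s_1, …, s_n` by `Fin n`):  `w(j) > w(j+1)`. -/
def IsDescent {n : ℕ} (w : Equiv.Perm (Fin (n + 1))) (j : Fin n) : Prop :=
  w j.succ < w j.castSucc

/-- `D_I`: the number of permutations `w` of `{1, …, n+1}` such that every
contiguous block of `I` contains a descent of `w`. -/
noncomputable def DIval {n : ℕ} (I : Finset (Fin n)) : ℕ :=
  (Finset.univ.filter (fun w : Equiv.Perm (Fin (n + 1)) =>
    ∀ B ∈ blocksOf I, ∃ j ∈ B, IsDescent w j)).card


open Equiv Finset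

section Sorting
variable {α : Type*} [Fintype α] [LinearOrder α]

/-- Uniqueness of sorted coset representative. -/
lemma sorted_unique (R : Finset α) (w : Perm α) (hw : StrictMonoOn ⇑w ↑R)
    (τ : Perm {x // x ∈ R}) (h : StrictMonoOn ⇑(w * Perm.ofSubtype τ) ↑R) : τ = 1 := by
  have hτ : StrictMono (⇑τ : {x // x ∈ R} → {x // x ∈ R}) := by
    intro x y hxy
    have hx : (x : α) ∈ (R : Set α) := x.2
    have hy : (y : α) ∈ (R : Set α) := y.2
    have h2 := h hx hy (Subtype.coe_lt_coe.2 hxy)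
    rw [Perm.mul_apply, Perm.mul_apply] at h2
    rw [Perm.ofSubtype_apply_of_mem τ x.2, Perm.ofSubtype_apply_of_mem τ y.2] at h2
    have := (hw.lt_iff_lt (τ ⟨(x:α), x.2⟩).2 (τ ⟨(y:α), y.2⟩).2).1
    simp only [Subtype.eta] at h2 ⊢
    exact Subtype.coe_lt_coe.1 (this h2)
  have : Subsingleton ({x // x ∈ R} ≃o {x // x ∈ R}) := inferInstance
  have he : (⟨τ, fun {a b} => hτ.le_iff_le⟩ : {x // x ∈ R} ≃o {x // x ∈ R}) =
      OrderIso.refl _ := Subsingleton.elim _ _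
  ext x
  have h3 := congrArg (fun e => (e : {x // x ∈ R} ≃o {x // x ∈ R}) x) he
  have h4 : τ x = x := by simpa using h3
  simpa using congrArg Subtype.val h4

/-- The permutation of `R` sorting `u` on `R`. -/
def sortPerm (u : Perm α) (R : Finset α) : Perm {x // x ∈ R} :=
  (R.orderIsoOfFin rfl).symm.toEquiv.trans
    { toFun := fun i => ⟨u.symm (((R.image u).orderIsoOfFin
        (card_image_of_injective R u.injective) i : α)), by
        obtain ⟨x, hx, he⟩ := Finset.mem_image.1
          ((R.image u).orderIsoOfFin (card_image_of_injective R u.injective) i).2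
        rw [← he, Equiv.symm_apply_apply]; exact hx⟩
      invFun := fun x => ((R.image u).orderIsoOfFin (card_image_of_injective R u.injective)).symm
        ⟨u x, Finset.mem_image_of_mem u x.2⟩
      left_inv := fun i => by
        apply ((R.image u).orderIsoOfFin (card_image_of_injective R u.injective)).injective
        rw [OrderIso.apply_symm_apply]
        exact Subtype.ext (u.apply_symm_apply _)
      right_inv := fun x => by
        apply Subtype.ext
        show u.symm _ = _
        rw [OrderIso.apply_symm_apply]
        exact u.symm_apply_apply _ }

lemma sortPerm_spec (u : Perm α) (R : Finset α) (x : α) (hx : x ∈ R) :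
    u (Perm.ofSubtype (sortPerm u R) x) =
      (((R.image u).orderIsoOfFin (card_image_of_injective R u.injective))
        ((R.orderIsoOfFin rfl).symm ⟨x, hx⟩) : α) := by
  rw [Perm.ofSubtype_apply_of_mem _ hx]
  simp only [sortPerm, Equiv.trans_apply, Equiv.coe_fn_mk]
  exact u.apply_symm_apply _

lemma sortPerm_sorted (u : Perm α) (R : Finset α) :
    StrictMonoOn ⇑(u * Perm.ofSubtype (sortPerm u R)) ↑R := by
  intro x hx y hy hxy
  rw [Perm.mul_apply, Perm.mul_apply, sortPerm_spec u R x hx, sortPerm_spec u R y hy]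
  rw [Subtype.coe_lt_coe]
  apply OrderIso.lt_iff_lt _ |>.2
  apply OrderIso.lt_iff_lt _ |>.2
  exact Subtype.mk_lt_mk.2 hxy

/-- Coset decomposition equivalence. -/
def cosetEquiv (R : Finset α) (Q : Perm α → Prop)
    (hQ : ∀ (w : Perm α) (σ : Perm {x // x ∈ R}), Q (w * Perm.ofSubtype σ) ↔ Q w) :
    {w : Perm α // Q w ∧ StrictMonoOn ⇑w ↑R} × Perm {x // x ∈ R} ≃ {w : Perm α // Q w} where
  toFun p := ⟨p.1.1 * Perm.ofSubtype p.2, (hQ _ _).2 p.1.2.1⟩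
  invFun u := (⟨u.1 * Perm.ofSubtype (sortPerm u.1 R),
      ⟨(hQ _ _).2 u.2, sortPerm_sorted u.1 R⟩⟩, (sortPerm u.1 R)⁻¹)
  left_inv := by
    rintro ⟨⟨w, hQw, hw⟩, σ⟩
    have key : sortPerm (w * Perm.ofSubtype σ) R = σ⁻¹ := by
      have h1 := sortPerm_sorted (w * Perm.ofSubtype σ) R
      have h2 : (w * Perm.ofSubtype σ) * Perm.ofSubtype (sortPerm (w * Perm.ofSubtype σ) R)
          = w * Perm.ofSubtype (σ * sortPerm (w * Perm.ofSubtype σ) R) := by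
        rw [map_mul, mul_assoc]
      rw [h2] at h1
      exact eq_inv_of_mul_eq_one_right (sorted_unique R w hw _ h1)
    refine Prod.ext ?_ ?_
    · apply Subtype.ext
      simp only [key, map_inv, mul_assoc, mul_inv_cancel, mul_one]
    · simp only [key, inv_inv]
  right_inv := by
    rintro ⟨u, hu⟩
    apply Subtype.ext
    simp only
    rw [map_inv, mul_assoc, mul_inv_cancel, mul_one]

end Sorting

section Coset
variable {α : Type*} [Fintype α] [LinearOrder α]

lemma card_coset (R : Finset α) (Q : Perm α → Prop)
    (hQ : ∀ w w' : Perm α, (∀ x, x ∉ R → w x = w' x) → (Q w ↔ Q w'))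
    (s t : Finset (Perm α)) (hs : ∀ w, w ∈ s ↔ Q w)
    (ht : ∀ w, w ∈ t ↔ (Q w ∧ StrictMonoOn ⇑w ↑R)) :
    s.card = t.card * Nat.factorial R.card := by
  have hQ' : ∀ (w : Perm α) (σ : Perm {x // x ∈ R}), Q (w * Perm.ofSubtype σ) ↔ Q w := by
    intro w σ
    apply hQ
    intro x hx
    rw [Perm.mul_apply, Perm.ofSubtype_apply_of_not_mem σ hx]
  have e := cosetEquiv R Q hQ'
  have h1 : Fintype.card {w : Perm α // Q w} = s.card := by
    rw [Fintype.card_subtype]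
    congr 1
    ext w
    simp [hs w]
  have h2 : Fintype.card {w : Perm α // Q w ∧ StrictMonoOn ⇑w ↑R} = t.card := by
    rw [Fintype.card_subtype]
    congr 1
    ext w
    simp [ht w]
  calc s.card = Fintype.card {w : Perm α // Q w} := h1.symm
    _ = Fintype.card ({w : Perm α // Q w ∧ StrictMonoOn ⇑w ↑R} × Perm {x // x ∈ R}) :=
      (Fintype.card_congr e).symm
    _ = t.card * Nat.factorial R.card := by
      rw [Fintype.card_prod, Fintype.card_perm, Fintype.card_coe, h2]

end Coset

section Blocks
variable {n : ℕ}

def runOf (B : Finset (Fin n)) : Finset (Fin (n + 1)) :=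
  B.image Fin.castSucc ∪ B.image Fin.succ

lemma runOf_eq_Icc {B : Finset (Fin n)} (a b : Fin n) (hab : a ≤ b) (hB : B = Finset.Icc a b) :
    runOf B = Finset.Icc (Fin.castSucc a) (Fin.succ b) := by
  ext x
  simp only [runOf, Finset.mem_union, Finset.mem_image, hB, Finset.mem_Icc, Fin.le_def,
    Fin.coe_castSucc, Fin.val_succ]
  constructor
  · rintro (⟨j, ⟨hj1, hj2⟩, rfl⟩ | ⟨j, ⟨hj1, hj2⟩, rfl⟩) <;>
      simp only [Fin.coe_castSucc, Fin.val_succ] <;> omega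
  · rintro ⟨h1, h2⟩
    by_cases hc : (x : ℕ) ≤ (b : ℕ)
    · exact Or.inl ⟨⟨(x : ℕ), lt_of_le_of_lt hc b.isLt⟩, ⟨h1, hc⟩, by
        simp [Fin.ext_iff]⟩
    · exact Or.inr ⟨b, ⟨hab, le_refl _⟩, by simp [Fin.ext_iff]; omega⟩

lemma card_runOf {B : Finset (Fin n)} (a b : Fin n) (hab : a ≤ b) (hB : B = Finset.Icc a b) :
    (runOf B).card = B.card + 1 := by
  rw [runOf_eq_Icc a b hab hB, hB, Fin.card_Icc, Fin.card_Icc]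
  rw [Fin.le_def] at hab
  simp only [Fin.coe_castSucc, Fin.val_succ]
  omega

lemma noDescent_iff_strictMonoOn {I B : Finset (Fin n)} (hB : IsBlock I B)
    (w : Equiv.Perm (Fin (n + 1))) :
    (∀ j ∈ B, ¬ IsDescent w j) ↔ StrictMonoOn ⇑w ↑(runOf B) := by
  obtain ⟨a, b, hab, hBe, hsub, hl, hr⟩ := hB
  rw [runOf_eq_Icc a b hab hBe]
  constructor
  · intro h
    have step : ∀ x y : Fin (n + 1), x ∈ Finset.Icc (Fin.castSucc a) (Fin.succ b) →
        y ∈ Finset.Icc (Fin.castSucc a) (Fin.succ b) → (y : ℕ) = (x : ℕ) + 1 → w x < w y := by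
      intro x y hx hy hxy
      simp only [Finset.mem_Icc, Fin.le_def, Fin.coe_castSucc, Fin.val_succ] at hx hy
      have hxb : (x : ℕ) ≤ (b : ℕ) := by omega
      have hxn : (x : ℕ) < n := lt_of_le_of_lt hxb b.isLt
      set j : Fin n := ⟨(x : ℕ), hxn⟩ with hj
      have hjB : j ∈ B := by
        rw [hBe, Finset.mem_Icc]
        constructor <;> rw [Fin.le_def] <;> simp [hj] <;> omega
      have hxj : x = Fin.castSucc j := by simp [Fin.ext_iff, hj]
      have hyj : y = Fin.succ j := by simp [Fin.ext_iff, hj]; omega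
      have hne : w x ≠ w y := fun he => by
        have h2 := w.injective he
        rw [hxj, hyj] at h2
        simp [Fin.ext_iff] at h2
      have h3 := h j hjB
      rw [IsDescent, not_lt, ← hxj, ← hyj] at h3
      exact lt_of_le_of_ne h3 hne
    have claim : ∀ d : ℕ, ∀ x y : Fin (n + 1), x ∈ Finset.Icc (Fin.castSucc a) (Fin.succ b) →
        y ∈ Finset.Icc (Fin.castSucc a) (Fin.succ b) → (y : ℕ) = (x : ℕ) + d + 1 → w x < w y := by
      intro d
      induction d with
      | zero => exact fun x y hx hy hxy => step x y hx hy hxy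
      | succ d ih =>
        intro x y hx hy hxy
        have hyn : (x : ℕ) + d + 1 < n + 1 := by have := y.isLt; omega
        have hzmem : (⟨(x : ℕ) + d + 1, hyn⟩ : Fin (n + 1)) ∈
            Finset.Icc (Fin.castSucc a) (Fin.succ b) := by
          simp only [Finset.mem_Icc, Fin.le_def, Fin.coe_castSucc, Fin.val_succ] at hx hy ⊢
          omega
        exact lt_trans (ih x _ hx hzmem rfl)
          (step _ y hzmem hy (show (y : ℕ) = (x : ℕ) + d + 1 + 1 from by omega))
    intro x hx y hy hxy
    rw [Finset.mem_coe] at hx hy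
    exact claim ((y : ℕ) - (x : ℕ) - 1) x y hx hy (by rw [Fin.lt_def] at hxy; omega)
  · intro h j hjB hd
    rw [hBe, Finset.mem_Icc] at hjB
    obtain ⟨hj1, hj2⟩ := hjB
    rw [Fin.le_def] at hj1 hj2
    have h1 : (Fin.castSucc j) ∈ (Finset.Icc (Fin.castSucc a) (Fin.succ b) : Finset (Fin (n+1))) := by
      simp only [Finset.mem_Icc, Fin.le_def, Fin.coe_castSucc, Fin.val_succ]; omega
    have h2 : (Fin.succ j) ∈ (Finset.Icc (Fin.castSucc a) (Fin.succ b) : Finset (Fin (n+1))) := by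
      simp only [Finset.mem_Icc, Fin.le_def, Fin.coe_castSucc, Fin.val_succ]; omega
    have := h (Finset.mem_coe.2 h1) (Finset.mem_coe.2 h2) (Fin.castSucc_lt_succ : Fin.castSucc j < Fin.succ j)
    exact absurd hd (not_lt.2 (le_of_lt this))

lemma runOf_disjoint {I B1 B2 : Finset (Fin n)} (h1 : B1 ∈ blocksOf I) (h2 : B2 ∈ blocksOf I)
    (hne : B1 ≠ B2) : Disjoint (runOf B1) (runOf B2) := by
  rw [blocksOf, Finset.mem_filter] at h1 h2
  obtain ⟨a1, b1, hab1, hB1, hs1, hl1, hr1⟩ := h1.2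
  obtain ⟨a2, b2, hab2, hB2, hs2, hl2, hr2⟩ := h2.2
  rw [Finset.disjoint_left]
  intro x hx1 hx2
  rw [runOf_eq_Icc a1 b1 hab1 hB1, Finset.mem_Icc] at hx1
  rw [runOf_eq_Icc a2 b2 hab2 hB2, Finset.mem_Icc] at hx2
  obtain ⟨hx1l, hx1r⟩ := hx1
  obtain ⟨hx2l, hx2r⟩ := hx2
  rw [Fin.le_def] at hx1l hx1r hx2l hx2r hab1 hab2
  simp only [Fin.coe_castSucc, Fin.val_succ] at hx1l hx1r hx2l hx2r
  have ha : (a1 : ℕ) = (a2 : ℕ) := by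
    by_contra hne'
    rcases Nat.lt_or_ge (a1 : ℕ) (a2 : ℕ) with hlt | hge
    · have hcn : (a2 : ℕ) - 1 < n := lt_trans (by omega) a2.isLt
      set c : Fin n := ⟨(a2 : ℕ) - 1, hcn⟩ with hc
      have hcI : c ∉ I := hl2 c (by simp [hc]; omega)
      have hcB : c ∈ B1 := by
        rw [hB1, Finset.mem_Icc]
        constructor <;> rw [Fin.le_def] <;> simp [hc] <;> omega
      exact hcI (hs1 hcB)
    · rcases Nat.lt_or_ge (a2 : ℕ) (a1 : ℕ) with hlt | hge2
      · have hcn : (a1 : ℕ) - 1 < n := lt_trans (by omega) a1.isLt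
        set c : Fin n := ⟨(a1 : ℕ) - 1, hcn⟩ with hc
        have hcI : c ∉ I := hl1 c (by simp [hc]; omega)
        have hcB : c ∈ B2 := by
          rw [hB2, Finset.mem_Icc]
          constructor <;> rw [Fin.le_def] <;> simp [hc] <;> omega
        exact hcI (hs2 hcB)
      · omega
  have hb : (b1 : ℕ) = (b2 : ℕ) := by
    by_contra hne'
    rcases Nat.lt_or_ge (b1 : ℕ) (b2 : ℕ) with hlt | hge
    · have hcn : (b1 : ℕ) + 1 < n := lt_of_le_of_lt (by omega) b2.isLt
      set c : Fin n := ⟨(b1 : ℕ) + 1, hcn⟩ with hc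
      have hcI : c ∉ I := hr1 c (by simp [hc])
      have hcB : c ∈ B2 := by
        rw [hB2, Finset.mem_Icc]
        constructor <;> rw [Fin.le_def] <;> simp [hc] <;> omega
      exact hcI (hs2 hcB)
    · rcases Nat.lt_or_ge (b2 : ℕ) (b1 : ℕ) with hlt | hge2
      · have hcn : (b2 : ℕ) + 1 < n := lt_of_le_of_lt (by omega) b1.isLt
        set c : Fin n := ⟨(b2 : ℕ) + 1, hcn⟩ with hc
        have hcI : c ∉ I := hr2 c (by simp [hc])
        have hcB : c ∈ B1 := by
          rw [hB1, Finset.mem_Icc]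
          constructor <;> rw [Fin.le_def] <;> simp [hc] <;> omega
        exact hcI (hs1 hcB)
      · omega
  exact hne (by rw [hB1, hB2, Fin.ext ha, Fin.ext hb])

end Blocks

section Count
variable {n : ℕ}

lemma strictMonoOn_eqOn_iff {α : Type*} [LinearOrder α] {S : Finset α}
    (w w' : Equiv.Perm α) (he : ∀ x ∈ S, w x = w' x) :
    StrictMonoOn ⇑w ↑S ↔ StrictMonoOn ⇑w' ↑S := by
  constructor <;> intro h x hx y hy hxy
  · rw [← he x hx, ← he y hy]; exact h hx hy hxy
  · rw [he x hx, he y hy]; exact h hx hy hxy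

lemma count_sorted (I : Finset (Fin n)) :
    ∀ T ⊆ blocksOf I,
      (Finset.univ.filter (fun w : Equiv.Perm (Fin (n + 1)) =>
        ∀ B ∈ T, StrictMonoOn ⇑w ↑(runOf B))).card *
        ∏ B ∈ T, Nat.factorial (B.card + 1) = Nat.factorial (n + 1) := by
  intro T
  induction T using Finset.induction_on with
  | empty =>
    intro _
    simp only [Finset.notMem_empty, false_implies, implies_true, Finset.filter_true,
      Finset.prod_empty, mul_one]
    rw [Finset.card_univ, Fintype.card_perm, Fintype.card_fin]
  | @insert B T hBT ih =>
    intro hsub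
    have hBblock : B ∈ blocksOf I := hsub (Finset.mem_insert_self B T)
    have hTsub : T ⊆ blocksOf I := fun x hx => hsub (Finset.mem_insert_of_mem hx)
    obtain ⟨a, b, hab, hBe, _, _, _⟩ := (Finset.mem_filter.1 hBblock).2
    have hcard : (runOf B).card = B.card + 1 := card_runOf a b hab hBe
    have hQ : ∀ w w' : Equiv.Perm (Fin (n + 1)), (∀ x, x ∉ runOf B → w x = w' x) →
        ((∀ B' ∈ T, StrictMonoOn ⇑w ↑(runOf B')) ↔
          (∀ B' ∈ T, StrictMonoOn ⇑w' ↑(runOf B'))) := by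
      intro w w' he
      apply forall₂_congr
      intro B' hB'
      apply strictMonoOn_eqOn_iff
      intro x hx
      exact he x (Finset.disjoint_left.1
        (runOf_disjoint (hTsub hB') hBblock (fun h => hBT (h ▸ hB'))) hx)
    have key := card_coset (runOf B)
      (fun w => ∀ B' ∈ T, StrictMonoOn ⇑w ↑(runOf B')) hQ
      (Finset.univ.filter (fun w : Equiv.Perm (Fin (n + 1)) =>
        ∀ B' ∈ T, StrictMonoOn ⇑w ↑(runOf B')))
      (Finset.univ.filter (fun w : Equiv.Perm (Fin (n + 1)) =>
        ∀ B' ∈ insert B T, StrictMonoOn ⇑w ↑(runOf B')))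
      (fun w => by rw [Finset.mem_filter]; exact ⟨fun h => h.2, fun h => ⟨Finset.mem_univ w, h⟩⟩)
      (fun w => by
        rw [Finset.mem_filter, Finset.forall_mem_insert]
        exact ⟨fun h => ⟨h.2.2, h.2.1⟩, fun h => ⟨Finset.mem_univ w, h.2, h.1⟩⟩)
    rw [Finset.prod_insert hBT, ← hcard, ← mul_assoc, ← key, ih hTsub]

lemma count_div (I : Finset (Fin n)) (T : Finset (Finset (Fin n))) (hT : T ⊆ blocksOf I) :
    (Finset.univ.filter (fun w : Equiv.Perm (Fin (n + 1)) =>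
      ∀ B ∈ T, StrictMonoOn ⇑w ↑(runOf B))).card
      = Nat.factorial (n + 1) / ∏ B ∈ T, Nat.factorial (B.card + 1) := by
  have h := count_sorted I T hT
  have hpos : 0 < ∏ B ∈ T, Nat.factorial (B.card + 1) :=
    Finset.prod_pos fun _ _ => Nat.factorial_pos _
  exact (Nat.div_eq_of_eq_mul_left hpos h.symm).symm

end Count

/-- `D_I = Σ_T (−1)^{|T|} · (n+1)! / ∏_{B ∈ T} (|B|+1)!`, the sum
ranging over all sets `T` of contiguous blocks of `I`. -/
theorem DI_inclusion_exclusion (n : ℕ) (hn : 1 ≤ n) (I : Finset (Fin n)) :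
    (DIval I : ℤ) =
      ∑ T ∈ (blocksOf I).powerset,
        (-1) ^ T.card *
          ((Nat.factorial (n + 1) / ∏ B ∈ T, Nat.factorial (B.card + 1) : ℕ) : ℤ) := by
  have hmain : ∀ T ∈ (blocksOf I).powerset,
      (∑ w : Equiv.Perm (Fin (n + 1)),
          (if (∀ B ∈ T, ∀ j ∈ B, ¬ IsDescent w j) then (1 : ℤ) else 0))
      = ((Nat.factorial (n + 1) / ∏ B ∈ T, Nat.factorial (B.card + 1) : ℕ) : ℤ) := by
    intro T hT
    have hTsub : T ⊆ blocksOf I := Finset.mem_powerset.1 hT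
    have hsum : (∑ w : Equiv.Perm (Fin (n + 1)),
          (if (∀ B ∈ T, ∀ j ∈ B, ¬ IsDescent w j) then (1 : ℤ) else 0))
        = ((Finset.univ.filter (fun w : Equiv.Perm (Fin (n + 1)) =>
            ∀ B ∈ T, ∀ j ∈ B, ¬ IsDescent w j)).card : ℤ) := by
      rw [Finset.card_filter]
      push_cast
      rfl
    rw [hsum]
    rw [Nat.cast_inj]
    have hfil : (Finset.univ.filter (fun w : Equiv.Perm (Fin (n + 1)) =>
          ∀ B ∈ T, ∀ j ∈ B, ¬ IsDescent w j)) =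
        (Finset.univ.filter (fun w : Equiv.Perm (Fin (n + 1)) =>
          ∀ B ∈ T, StrictMonoOn ⇑w ↑(runOf B))) := by
      apply Finset.filter_congr
      intro w _
      exact forall₂_congr fun B hB =>
        noDescent_iff_strictMonoOn ((Finset.mem_filter.1 (hTsub hB)).2) w
    rw [hfil, count_div I T hTsub]
  have hrw : ∀ w : Equiv.Perm (Fin (n + 1)),
      (if (∀ B ∈ blocksOf I, ∃ j ∈ B, IsDescent w j) then (1 : ℤ) else 0)
      = ∑ T ∈ (blocksOf I).powerset,
          (-1) ^ T.card * (if (∀ B ∈ T, ∀ j ∈ B, ¬ IsDescent w j) then (1 : ℤ) else 0) := by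
    intro w
    have prodite : ∀ (s : Finset (Finset (Fin n))) (p : Finset (Fin n) → Prop)
        [DecidablePred p] [Decidable (∀ B ∈ s, p B)],
        ∏ B ∈ s, (if p B then (1 : ℤ) else 0) = (if ∀ B ∈ s, p B then (1 : ℤ) else 0) := by
      intro s p _ _
      by_cases h : ∀ B ∈ s, p B
      · rw [if_pos h, Finset.prod_eq_one]
        intro B hB; rw [if_pos (h B hB)]
      · rw [if_neg h]
        push_neg at h
        obtain ⟨B, hB, hnp⟩ := h
        apply Finset.prod_eq_zero hB
        rw [if_neg hnp]
    rw [← prodite (blocksOf I) (fun B => ∃ j ∈ B, IsDescent w j)]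
    have hper : ∀ B ∈ blocksOf I, (if (∃ j ∈ B, IsDescent w j) then (1 : ℤ) else 0)
        = (-(if (∀ j ∈ B, ¬ IsDescent w j) then (1 : ℤ) else 0)) + 1 := by
      intro B _
      by_cases h : ∃ j ∈ B, IsDescent w j
      · obtain ⟨j, hj, hd⟩ := h
        rw [if_pos ⟨j, hj, hd⟩, if_neg (fun hh => hh j hj hd)]; ring
      · rw [if_neg h, if_pos (fun j hj hd => h ⟨j, hj, hd⟩)]; ring
    rw [Finset.prod_congr rfl hper, Finset.prod_add]
    apply Finset.sum_congr rfl
    intro T hT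
    have e3 : ∏ B ∈ T, (-(if (∀ j ∈ B, ¬ IsDescent w j) then (1 : ℤ) else 0))
        = (-1) ^ T.card * ∏ B ∈ T, (if (∀ j ∈ B, ¬ IsDescent w j) then (1 : ℤ) else 0) := by
      have hh : ∀ B ∈ T, (-(if (∀ j ∈ B, ¬ IsDescent w j) then (1 : ℤ) else 0))
          = (-1) * (if (∀ j ∈ B, ¬ IsDescent w j) then (1 : ℤ) else 0) := fun B _ => by ring
      rw [Finset.prod_congr rfl hh, Finset.prod_mul_distrib, Finset.prod_const]
    rw [Finset.prod_const_one, mul_one, e3,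
      prodite T (fun B => ∀ j ∈ B, ¬ IsDescent w j)]
  have h0 : (DIval I : ℤ) = ∑ w : Equiv.Perm (Fin (n + 1)),
      (if (∀ B ∈ blocksOf I, ∃ j ∈ B, IsDescent w j) then (1 : ℤ) else 0) := by
    rw [DIval, Finset.card_filter]
    push_cast
    rfl
  rw [h0, Finset.sum_congr rfl (fun w _ => hrw w), Finset.sum_comm]
  apply Finset.sum_congr rfl
  intro T hT
  rw [← Finset.mul_sum, hmain T hT]
end
end

section
/- Let n ≥ 1, let I ⊆ {1,…,n}, and let T be any set of contiguous blocks of I. Then the number of permutations w of {1,…,n+1} such that no j lying in any block of T is a descent of w (i.e. w(j) < w(j+1) for every j belonging to a block in T) equals (n+1)! / ∏_{B ∈ T} (|B|+1)!. -/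
noncomputable section

open scoped Classical

lemma blk_left_le {n : ℕ} {I : Finset (Fin n)} {a b a' b' : Fin n}
    (hBI : Finset.Icc a b ⊆ I)
    (hR : ∀ c : Fin n, (b : ℕ) + 1 = (c : ℕ) → c ∉ I)
    (hab' : a' ≤ b') (hBI' : Finset.Icc a' b' ⊆ I)
    (hL' : ∀ c : Fin n, (c : ℕ) + 1 = (a' : ℕ) → c ∉ I)
    (hov : (a' : ℕ) ≤ (b : ℕ) + 1) : (a' : ℕ) ≤ (a : ℕ) := by
  by_contra hlt
  push_neg at hlt
  have ha'I : a' ∈ I := hBI' (Finset.mem_Icc.mpr ⟨le_refl _, hab'⟩)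
  rcases eq_or_lt_of_le hov with he | hlt2
  · exact hR a' he.symm ha'I
  · have hcn : (a' : ℕ) - 1 < n := by omega
    have hc : (⟨(a' : ℕ) - 1, hcn⟩ : Fin n) ∉ I := hL' _ (by simp; omega)
    exact hc (hBI (Finset.mem_Icc.mpr ⟨by rw [Fin.le_def]; simp; omega,
      by rw [Fin.le_def]; simp; omega⟩))

lemma blk_right_le {n : ℕ} {I : Finset (Fin n)} {b a' b' : Fin n}
    (hR : ∀ c : Fin n, (b : ℕ) + 1 = (c : ℕ) → c ∉ I)
    (hBI' : Finset.Icc a' b' ⊆ I)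
    (ha' : (a' : ℕ) ≤ (b : ℕ) + 1) : (b' : ℕ) ≤ (b : ℕ) := by
  by_contra hlt
  push_neg at hlt
  have hcn : (b : ℕ) + 1 < n := by have := b'.isLt; omega
  have hc : (⟨(b : ℕ) + 1, hcn⟩ : Fin n) ∉ I := hR _ (by simp)
  exact hc (hBI' (Finset.mem_Icc.mpr ⟨by rw [Fin.le_def]; simp; omega,
    by rw [Fin.le_def]; simp; omega⟩))

lemma blk_disjoint {n : ℕ} {I : Finset (Fin n)} {a b a' b' : Fin n}
    (hab : a ≤ b) (hBI : Finset.Icc a b ⊆ I)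
    (hL : ∀ c : Fin n, (c : ℕ) + 1 = (a : ℕ) → c ∉ I)
    (hR : ∀ c : Fin n, (b : ℕ) + 1 = (c : ℕ) → c ∉ I)
    (hab' : a' ≤ b') (hBI' : Finset.Icc a' b' ⊆ I)
    (hL' : ∀ c : Fin n, (c : ℕ) + 1 = (a' : ℕ) → c ∉ I)
    (hR' : ∀ c : Fin n, (b' : ℕ) + 1 = (c : ℕ) → c ∉ I)
    (hne : Finset.Icc a b ≠ Finset.Icc a' b') :
    (b : ℕ) + 1 < (a' : ℕ) ∨ (b' : ℕ) + 1 < (a : ℕ) := by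
  by_contra hcon
  push_neg at hcon
  obtain ⟨h1, h2⟩ := hcon
  have e1 : (a' : ℕ) ≤ (a : ℕ) := blk_left_le hBI hR hab' hBI' hL' (by omega)
  have e2 : (a : ℕ) ≤ (a' : ℕ) := blk_left_le hBI' hR' hab hBI hL (by omega)
  have e3 : (b' : ℕ) ≤ (b : ℕ) := blk_right_le hR hBI' (by omega)
  have e4 : (b : ℕ) ≤ (b' : ℕ) := blk_right_le hR' hBI (by omega)
  exact hne (by rw [Fin.ext_iff.mpr (show (a:ℕ) = (a':ℕ) by omega),
    Fin.ext_iff.mpr (show (b:ℕ) = (b':ℕ) by omega)])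

lemma count_mul_prod (n : ℕ) (I : Finset (Fin n)) :
    ∀ T : Finset (Finset (Fin n)), T ⊆ blocksOf I →
    (Finset.univ.filter (fun w : Equiv.Perm (Fin (n + 1)) =>
        ∀ B ∈ T, ∀ j ∈ B, w j.castSucc < w j.succ)).card *
      ∏ B ∈ T, Nat.factorial (B.card + 1) = Nat.factorial (n + 1) := by
  intro T
  induction T using Finset.induction_on with
  | empty =>
    intro _
    simp [Finset.filter_true_of_mem, Finset.card_univ, Fintype.card_perm]
  | @insert B S hBS ih =>
    intro hT
    have hS : S ⊆ blocksOf I := fun x hx => hT (Finset.mem_insert_of_mem hx)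
    have hBmem : B ∈ blocksOf I := hT (Finset.mem_insert_self _ _)
    have hBblk : IsBlock I B := (Finset.mem_filter.mp hBmem).2
    obtain ⟨a, b, hab, hBeq, hBI, hL, hR⟩ := hBblk
    subst hBeq
    have habv : (a : ℕ) ≤ (b : ℕ) := hab
    have hbn : (b : ℕ) < n := b.isLt
    set m : ℕ := (b : ℕ) + 1 - (a : ℕ) with hm
    have hembv : ∀ i : Fin (m + 1), (a : ℕ) + (i : ℕ) < n + 1 := by
      intro i; have := i.isLt; omega
    set emb : Fin (m + 1) ↪ Fin (n + 1) :=
      ⟨fun i => ⟨(a : ℕ) + (i : ℕ), hembv i⟩, by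
        intro i j h
        have : (a : ℕ) + (i : ℕ) = (a : ℕ) + (j : ℕ) := congrArg Fin.val h
        exact Fin.ext (by omega)⟩ with hembdef
    have hembval : ∀ i : Fin (m + 1), ((emb i : Fin (n + 1)) : ℕ) = (a : ℕ) + (i : ℕ) :=
      fun i => rfl
    have hrange : ∀ x : Fin (n + 1),
        x ∈ Set.range emb ↔ (a : ℕ) ≤ (x : ℕ) ∧ (x : ℕ) ≤ (b : ℕ) + 1 := by
      intro x
      constructor
      · rintro ⟨i, rfl⟩
        have := i.isLt
        rw [hembval]; omega
      · rintro ⟨h1, h2⟩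
        refine ⟨⟨(x : ℕ) - (a : ℕ), by omega⟩, Fin.ext ?_⟩
        rw [hembval]
        show (a : ℕ) + ((x : ℕ) - (a : ℕ)) = (x : ℕ)
        omega
    have hgood_iff : ∀ v : Equiv.Perm (Fin (n + 1)),
        (∀ j ∈ Finset.Icc a b, v j.castSucc < v j.succ) ↔
          StrictMono (fun i : Fin (m + 1) => v (emb i)) := by
      intro v
      rw [Fin.strictMono_iff_lt_succ]
      constructor
      · intro h i
        have hi := i.isLt
        have hjn : (a : ℕ) + (i : ℕ) < n := by omega
        have hmem : (⟨(a : ℕ) + (i : ℕ), hjn⟩ : Fin n) ∈ Finset.Icc a b :=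
          Finset.mem_Icc.mpr ⟨show (a : ℕ) ≤ (a : ℕ) + (i : ℕ) by omega,
            show (a : ℕ) + (i : ℕ) ≤ (b : ℕ) by omega⟩
        have hlt := h _ hmem
        have e1 : emb i.castSucc = Fin.castSucc (⟨(a : ℕ) + (i : ℕ), hjn⟩ : Fin n) := by
          refine Fin.ext ?_
          rw [hembval]
          show (a : ℕ) + ((i : ℕ)) = (a : ℕ) + (i : ℕ)
          rfl
        have e2 : emb i.succ = Fin.succ (⟨(a : ℕ) + (i : ℕ), hjn⟩ : Fin n) := by
          refine Fin.ext ?_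
          rw [hembval]
          show (a : ℕ) + ((i : ℕ) + 1) = (a : ℕ) + (i : ℕ) + 1
          omega
        show v (emb i.castSucc) < v (emb i.succ)
        rw [e1, e2]
        exact hlt
      · intro h j hj
        rw [Finset.mem_Icc, Fin.le_def, Fin.le_def] at hj
        have hilt : (j : ℕ) - (a : ℕ) < m := by omega
        have hlt := h ⟨(j : ℕ) - (a : ℕ), hilt⟩
        have e1 : emb (Fin.castSucc ⟨(j : ℕ) - (a : ℕ), hilt⟩) = j.castSucc := by
          refine Fin.ext ?_
          rw [hembval]
          show (a : ℕ) + ((j : ℕ) - (a : ℕ)) = (j.castSucc : ℕ)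
          rw [Fin.coe_castSucc]; omega
        have e2 : emb (Fin.succ ⟨(j : ℕ) - (a : ℕ), hilt⟩) = j.succ := by
          refine Fin.ext ?_
          rw [hembval]
          show (a : ℕ) + ((j : ℕ) - (a : ℕ) + 1) = (j.succ : ℕ)
          rw [Fin.val_succ]; omega
        rw [← e1, ← e2]
        exact hlt
    have hother : ∀ B'' ∈ S, ∀ j ∈ B'',
        (Fin.castSucc j) ∉ Set.range emb ∧ (Fin.succ j) ∉ Set.range emb := by
      intro B'' hB'' j hj
      have hB''mem : B'' ∈ blocksOf I := hS hB''
      obtain ⟨a2, b2, hab2, hEq2, hBI2, hL2, hR2⟩ := (Finset.mem_filter.mp hB''mem).2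
      rw [hEq2] at hBI2
      have hne : Finset.Icc a b ≠ Finset.Icc a2 b2 := by
        intro hcontr
        exact hBS (by rw [hcontr, ← hEq2]; exact hB'')
      have hd := blk_disjoint hab hBI hL hR hab2 hBI2 hL2 hR2 hne
      rw [hEq2, Finset.mem_Icc, Fin.le_def, Fin.le_def] at hj
      constructor
      · rw [hrange]
        simp only [Fin.coe_castSucc]
        omega
      · rw [hrange]
        simp only [Fin.val_succ]
        omega
    -- extension of a permutation of the run to all of Fin (n+1)
    set extP : Equiv.Perm (Fin (m + 1)) → Equiv.Perm (Fin (n + 1)) :=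
      fun σ => σ.viaFintypeEmbedding emb with hextdef
    have hextim : ∀ (σ : Equiv.Perm (Fin (m + 1))) i, extP σ (emb i) = emb (σ i) :=
      fun σ i => Equiv.Perm.viaFintypeEmbedding_apply_image σ emb i
    have hextout : ∀ (σ : Equiv.Perm (Fin (m + 1))) (x : Fin (n + 1)),
        x ∉ Set.range emb → extP σ x = x :=
      fun σ x h => Equiv.Perm.viaFintypeEmbedding_apply_notMem_range σ emb h
    have hextinv_out : ∀ (σ : Equiv.Perm (Fin (m + 1))) (x : Fin (n + 1)),
        x ∉ Set.range emb → (extP σ)⁻¹ x = x := by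
      intro σ x h
      conv_lhs => rw [← hextout σ x h]
      simp
    have hextinv_im : ∀ (σ : Equiv.Perm (Fin (m + 1))) i, (extP σ)⁻¹ (emb i) = emb (σ⁻¹ i) := by
      intro σ i
      have h1 : extP σ (emb (σ⁻¹ i)) = emb i := by rw [hextim]; simp
      rw [← h1]; simp
    -- the two maps of the bijection
    have hstep :
        (Finset.univ.filter (fun w : Equiv.Perm (Fin (n + 1)) =>
          ∀ B' ∈ S, ∀ j ∈ B', w j.castSucc < w j.succ)).card =
        ((Finset.univ.filter (fun w : Equiv.Perm (Fin (n + 1)) =>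
          ∀ B' ∈ insert (Finset.Icc a b) S, ∀ j ∈ B', w j.castSucc < w j.succ)) ×ˢ
          (Finset.univ : Finset (Equiv.Perm (Fin (m + 1))))).card := by
      refine Finset.card_nbij'
        (i := fun w => (w * extP (Tuple.sort (fun i => w (emb i))),
          Tuple.sort (fun i => w (emb i))))
        (j := fun p => p.1 * (extP p.2)⁻¹) ?_ ?_ ?_ ?_
      · intro w hw
        simp only [Finset.mem_coe, Finset.mem_filter, Finset.mem_univ, true_and] at hw
        rw [Finset.mem_coe, Finset.mem_product]
        refine ⟨?_, Finset.mem_univ _⟩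
        simp only [Finset.mem_filter, Finset.mem_univ, true_and]
        intro B' hB'
        rcases Finset.mem_insert.mp hB' with rfl | hB'S
        · rw [hgood_iff]
          set f : Fin (m + 1) → Fin (n + 1) := fun i => w (emb i) with hf
          have hfinj : Function.Injective f := fun i j h => emb.injective (w.injective h)
          have heq : (fun i => (w * extP (Tuple.sort f)) (emb i)) = f ∘ (Tuple.sort f) := by
            funext i
            show (w * extP (Tuple.sort f)) (emb i) = f (Tuple.sort f i)
            rw [Equiv.Perm.mul_apply, hextim]
          rw [heq]
          exact (Tuple.monotone_sort f).strictMono_of_injective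
            (hfinj.comp (Tuple.sort f).injective)
        · intro j hj
          obtain ⟨h1, h2⟩ := hother B' hB'S j hj
          rw [Equiv.Perm.mul_apply, Equiv.Perm.mul_apply, hextout _ _ h1, hextout _ _ h2]
          exact hw B' hB'S j hj
      · intro p hp
        rw [Finset.mem_coe, Finset.mem_product] at hp
        obtain ⟨hp1, -⟩ := hp
        simp only [Finset.mem_coe, Finset.mem_filter, Finset.mem_univ, true_and] at hp1 ⊢
        intro B' hB'S j hj
        obtain ⟨h1, h2⟩ := hother B' hB'S j hj
        rw [Equiv.Perm.mul_apply, Equiv.Perm.mul_apply, hextinv_out _ _ h1, hextinv_out _ _ h2]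
        exact hp1 B' (Finset.mem_insert_of_mem hB'S) j hj
      · intro w hw
        exact mul_inv_cancel_right _ _
      · intro p hp
        rw [Finset.mem_coe, Finset.mem_product] at hp
        obtain ⟨hp1, -⟩ := hp
        simp only [Finset.mem_filter, Finset.mem_univ, true_and] at hp1
        obtain ⟨v, σ⟩ := p
        have hg : StrictMono (fun i : Fin (m + 1) => v (emb i)) :=
          (hgood_iff v).mp (hp1 _ (Finset.mem_insert_self _ _))
        have hsort : Tuple.sort (fun i => (v * (extP σ)⁻¹) (emb i)) = σ := by
          set f : Fin (m + 1) → Fin (n + 1) := fun i => (v * (extP σ)⁻¹) (emb i) with hf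
          have hfc : ∀ i, f i = v (emb (σ⁻¹ i)) := by
            intro i
            show (v * (extP σ)⁻¹) (emb i) = v (emb (σ⁻¹ i))
            rw [Equiv.Perm.mul_apply, hextinv_im]
          have hcomp : f ∘ σ = fun i => v (emb i) := by
            funext i
            show f (σ i) = v (emb i)
            rw [hfc]
            simp
          have hmono : Monotone (f ∘ σ) := by rw [hcomp]; exact hg.monotone
          have hkey : f ∘ σ = f ∘ Tuple.sort f := Tuple.comp_sort_eq_comp_iff_monotone.mpr hmono
          have hfinj : Function.Injective f := by
            intro i j h
            rw [hfc, hfc] at h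
            exact (Equiv.injective σ⁻¹) (emb.injective (v.injective h))
          exact Equiv.ext fun i => (hfinj (congrFun hkey i)).symm
        show (v * (extP σ)⁻¹ * extP (Tuple.sort fun i => (v * (extP σ)⁻¹) (emb i)),
          Tuple.sort fun i => (v * (extP σ)⁻¹) (emb i)) = (v, σ)
        rw [hsort, inv_mul_cancel_right]
    rw [Finset.card_product, Finset.card_univ, Fintype.card_perm, Fintype.card_fin] at hstep
    rw [Finset.prod_insert hBS]
    have hcc : (Finset.Icc a b).card + 1 = m + 1 := by rw [Fin.card_Icc]
    rw [hcc, ← mul_assoc, ← hstep]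
    exact ih hS

/-- For any set `T` of contiguous blocks of `I`, the number of
permutations `w` of `{1,…,n+1}` with `w(j) < w(j+1)` for every `j` lying in a block
of `T` equals `(n+1)! / ∏_{B ∈ T} (|B|+1)!`. -/
theorem card_no_descent_in_blocks (n : ℕ) (hn : 1 ≤ n) (I : Finset (Fin n))
    (T : Finset (Finset (Fin n))) (hT : T ⊆ blocksOf I) :
    (Finset.univ.filter (fun w : Equiv.Perm (Fin (n + 1)) =>
        ∀ B ∈ T, ∀ j ∈ B, w j.castSucc < w j.succ)).card =
      Nat.factorial (n + 1) / ∏ B ∈ T, Nat.factorial (B.card + 1) := by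
  have h := count_mul_prod n I T hT
  have hP : 0 < ∏ B ∈ T, Nat.factorial (B.card + 1) :=
    Finset.prod_pos fun B _ => Nat.factorial_pos _
  rw [← h, Nat.mul_div_cancel _ hP]
end
end

section
/- There exists a ring automorphism σ of ℰ_n(v) such that σ(e_i) = e_i for all i, σ(g_i)·g_i = g_i·σ(g_i) = 1 for all i (i.e. σ(g_i) = g_i^{-1}), and σ is semilinear over the ℂ-algebra automorphism of ℂ(v) sending v to v^{-1}, i.e. σ(p(v)·x) = p(v^{-1})·σ(x) for every scalar p(v) ∈ ℂ(v) and every x ∈ ℰ_n(v). -/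
noncomputable section

/-- The field `K = ℂ(v)` of rational functions over `ℂ`. -/
abbrev Kv : Type := RatFunc ℂ

/-- The variable `v ∈ ℂ(v)`. -/
noncomputable def vv : Kv := RatFunc.X

/-- The generator `g_i` of the free algebra (`.inl i ↦ g_i`). -/
noncomputable def bgF (n : ℕ) (i : Fin n) : FreeAlgebra Kv (Fin n ⊕ Fin n) :=
  FreeAlgebra.ι Kv (Sum.inl i)

/-- The generator `e_i` of the free algebra (`.inr i ↦ e_i`). -/
noncomputable def beF (n : ℕ) (i : Fin n) : FreeAlgebra Kv (Fin n ⊕ Fin n) :=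
  FreeAlgebra.ι Kv (Sum.inr i)

/-- Defining relations of the (type `A_n`) generalized algebra of braids and ties
`ℰ_n(v)`, for generators `g_1, …, g_n, e_1, …, e_n` (indexed here by `Fin n`,
with `|i − j|` rendered as `Nat.dist i j`). -/
inductive BTRel (n : ℕ) :
    FreeAlgebra Kv (Fin n ⊕ Fin n) → FreeAlgebra Kv (Fin n ⊕ Fin n) → Prop
  | gg_comm (i j : Fin n) (h : 2 ≤ Nat.dist i j) :
      BTRel n (bgF n i * bgF n j) (bgF n j * bgF n i)
  | eg_comm (i j : Fin n) (h : 2 ≤ Nat.dist i j) :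
      BTRel n (beF n i * bgF n j) (bgF n j * beF n i)
  | braid (i j : Fin n) (h : Nat.dist i j = 1) :
      BTRel n (bgF n i * bgF n j * bgF n i) (bgF n j * bgF n i * bgF n j)
  | egg (i j : Fin n) (h : Nat.dist i j = 1) :
      BTRel n (beF n i * bgF n j * bgF n i) (bgF n j * bgF n i * beF n j)
  | ee_comm (i j : Fin n) :
      BTRel n (beF n i * beF n j) (beF n j * beF n i)
  | e_idem (i : Fin n) :
      BTRel n (beF n i * beF n i) (beF n i)
  | eg_same (i : Fin n) :
      BTRel n (beF n i * bgF n i) (bgF n i * beF n i)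
  | eeg₁ (i j : Fin n) (h : Nat.dist i j = 1) :
      BTRel n (beF n i * beF n j * bgF n j) (beF n i * bgF n j * beF n i)
  | eeg₂ (i j : Fin n) (h : Nat.dist i j = 1) :
      BTRel n (beF n i * bgF n j * beF n i) (bgF n j * beF n i * beF n j)
  | quad (i : Fin n) :
      BTRel n (bgF n i * bgF n i)
        (1 + (vv ^ 2 - 1) • (beF n i * (1 + bgF n i)))

/-- The generalized algebra of braids and ties `ℰ_n(v)` in type `A_n`. -/
abbrev BT (n : ℕ) := RingQuot (BTRel n)

/-- The generator `g_i` of `ℰ_n(v)`. -/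
noncomputable def bg (n : ℕ) (i : Fin n) : BT n :=
  RingQuot.mkAlgHom Kv (BTRel n) (bgF n i)

/-- The generator `e_i` of `ℰ_n(v)`. -/
noncomputable def be (n : ℕ) (i : Fin n) : BT n :=
  RingQuot.mkAlgHom Kv (BTRel n) (beF n i)

/-- The subalgebra `𝒞_n(v) ⊆ ℰ_n(v)` generated by `g_1, …, g_n`. -/
noncomputable def BTC (n : ℕ) : Subalgebra Kv (BT n) :=
  Algebra.adjoin Kv (Set.range (bg n))

/-! ### The automorphism `τ` of `ℂ(v)` with `τ(v) = v⁻¹` -/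

lemma vv_trans : Transcendental ℂ vv := by
  have h := Polynomial.transcendental_X ℂ
  have h2 : Transcendental ℂ (algebraMap (Polynomial ℂ) Kv Polynomial.X) :=
    (transcendental_algebraMap_iff (IsFractionRing.injective (Polynomial ℂ) Kv)).2 h
  simpa [vv, RatFunc.algebraMap_X] using h2

lemma vvinv_trans : Transcendental ℂ (vv⁻¹) := by
  intro h
  exact vv_trans (IsAlgebraic.inv_iff.mp h)

noncomputable def tauPhi : Polynomial ℂ →ₐ[ℂ] Kv := Polynomial.aeval vv⁻¹

lemma tauPhi_inj : Function.Injective tauPhi :=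
  transcendental_iff_injective.mp vvinv_trans

noncomputable def tau0 : Kv →ₐ[ℂ] Kv :=
  RatFunc.liftAlgHom tauPhi
    (nonZeroDivisors_le_comap_nonZeroDivisors_of_injective _ tauPhi_inj)

lemma tau0_poly (p : Polynomial ℂ) :
    tau0 (algebraMap (Polynomial ℂ) Kv p) = tauPhi p := by
  have := RatFunc.liftAlgHom_apply_div' tauPhi
    (nonZeroDivisors_le_comap_nonZeroDivisors_of_injective _ tauPhi_inj) p 1
  simpa [tau0] using this

lemma tau0_X : tau0 vv = vv⁻¹ := by
  have := tau0_poly Polynomial.X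
  simpa [vv, RatFunc.algebraMap_X, tauPhi] using this

lemma tau0_tau0 : tau0.comp tau0 = AlgHom.id ℂ Kv := by
  have h : (tau0.toRingHom.comp tau0.toRingHom) = RingHom.id Kv := by
    apply IsLocalization.ringHom_ext (nonZeroDivisors (Polynomial ℂ))
    ext p
    · have hC : RatFunc.C p = algebraMap ℂ Kv p := rfl
      simp [hC]
    · have hX : algebraMap (Polynomial ℂ) Kv Polynomial.X = vv := RatFunc.algebraMap_X
      simp only [RingHom.coe_comp, Function.comp_apply, AlgHom.toRingHom_eq_coe,
        AlgHom.coe_toRingHom, RingHom.id_apply, hX]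
      rw [tau0_X, map_inv₀, tau0_X, inv_inv]
  ext x
  exact RingHom.congr_fun h x

/-- The `ℂ`-algebra automorphism of `ℂ(v)` sending `v` to `v⁻¹`. -/
noncomputable def tau : Kv ≃ₐ[ℂ] Kv := AlgEquiv.ofAlgHom tau0 tau0 tau0_tau0 tau0_tau0

lemma tau_X : tau vv = vv⁻¹ := tau0_X
lemma tau_tau (p : Kv) : tau (tau p) = p := AlgHom.congr_fun tau0_tau0 p

lemma tau_c : tau (vv ^ 2 - 1) = (vv⁻¹) ^ 2 - 1 := by
  rw [map_sub, map_pow, map_one, tau_X]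

lemma tau_cinv : tau ((vv⁻¹) ^ 2 - 1) = vv ^ 2 - 1 := by
  rw [← tau_c, tau_tau]

lemma hs_main : (vv ^ 2 - 1) + ((vv⁻¹) ^ 2 - 1) * (1 + (vv ^ 2 - 1)) = 0 := by
  have hv : (vv : Kv) ≠ 0 := RatFunc.X_ne_zero
  field_simp
  ring

/-! ### Monoid helper lemmas -/

private lemma btCancel {M : Type*} [Monoid M] {g g' x y : M} (h : g * g' = 1)
    (hxy : x * g = y * g) : x = y := by
  have h2 := congrArg (· * g') hxy
  simpa [mul_assoc, h] using h2

private lemma btInvUnique {M : Type*} [Monoid M] {m x y : M} (hx : x * m = 1) (hmx : m * x = 1)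
    (hy : y * m = 1) : y = x := by
  calc y = y * (m * x) := by rw [hmx, mul_one]
    _ = y * m * x := by rw [mul_assoc]
    _ = x := by rw [hy, one_mul]

private lemma btCommInv {M : Type*} [Monoid M] {g g' x : M} (h1 : g * g' = 1) (h2 : g' * g = 1)
    (h : x * g = g * x) : x * g' = g' * x := by
  apply btCancel h1
  calc x * g' * g = x * (g' * g) := by rw [mul_assoc]
    _ = x := by rw [h2, mul_one]
    _ = g' * (g * x) := by rw [← mul_assoc, h2, one_mul]
    _ = g' * (x * g) := by rw [h]
    _ = g' * x * g := by rw [mul_assoc]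

/-! ### Generic computations in an algebra -/

section Generic
variable {K A : Type*} [CommRing K] [Ring A] [Algebra K A]

lemma L_inv1 (e g : A) (c₀ c : K)
    (hq : g * g = 1 + c₀ • (e * (1 + g)))
    (hc : e * g = g * e) (hi : e * e = e)
    (hs : c₀ + c * (1 + c₀) = 0) :
    g * (g + c • (e * (1 + g))) = 1 := by
  have hge : ∀ x : A, g * (e * x) = e * (g * x) := by
    intro x; rw [← mul_assoc, ← hc, mul_assoc]
  have hee : ∀ x : A, e * (e * x) = e * x := by
    intro x; rw [← mul_assoc, hi]
  simp only [mul_add, add_mul, mul_one, one_mul, smul_add, mul_smul_comm,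
    smul_mul_assoc, smul_smul, mul_assoc, hge, hee, hi, ← hc, hq]
  rw [add_assoc, add_eq_left]
  match_scalars <;> linear_combination hs

lemma L_inv2 (e g : A) (c₀ c : K)
    (hq : g * g = 1 + c₀ • (e * (1 + g)))
    (hc : e * g = g * e) (hi : e * e = e)
    (hs : c₀ + c * (1 + c₀) = 0) :
    (g + c • (e * (1 + g))) * g = 1 := by
  have hge : ∀ x : A, g * (e * x) = e * (g * x) := by
    intro x; rw [← mul_assoc, ← hc, mul_assoc]
  have hee : ∀ x : A, e * (e * x) = e * x := by
    intro x; rw [← mul_assoc, hi]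
  simp only [mul_add, add_mul, mul_one, one_mul, smul_add, mul_smul_comm,
    smul_mul_assoc, smul_smul, mul_assoc, hge, hee, hi, ← hc, hq]
  rw [add_assoc, add_eq_left]
  match_scalars <;> linear_combination hs

lemma L_invol (e g : A) (c₀ c : K)
    (hi : e * e = e)
    (hs : c₀ + c * (1 + c₀) = 0) :
    (g + c • (e * (1 + g))) + c₀ • (e * (1 + (g + c • (e * (1 + g))))) = g := by
  have hee : ∀ x : A, e * (e * x) = e * x := by
    intro x; rw [← mul_assoc, hi]
  simp only [mul_add, add_mul, mul_one, one_mul, smul_add, mul_smul_comm,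
    smul_mul_assoc, smul_smul, mul_assoc, hee, hi]
  rw [add_assoc, add_eq_left]
  match_scalars <;> linear_combination hs

lemma L_quad (e g : A) (c₀ c : K)
    (hq : g * g = 1 + c₀ • (e * (1 + g)))
    (hc : e * g = g * e) (hi : e * e = e)
    (hs : c₀ + c * (1 + c₀) = 0) :
    (g + c • (e * (1 + g))) * (g + c • (e * (1 + g)))
      = 1 + c • (e * (1 + (g + c • (e * (1 + g))))) := by
  apply btCancel (L_inv1 e g c₀ c hq hc hi hs)
  rw [mul_assoc, L_inv2 e g c₀ c hq hc hi hs, mul_one, add_mul, one_mul,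
    smul_mul_assoc, mul_assoc, add_mul, one_mul, L_inv2 e g c₀ c hq hc hi hs,
    add_comm (1 : A) g]

lemma L_eegkey (a b g : A) (c : K)
    (haa : a * a = a) (hbb : b * b = b) (hab : b * a = a * b)
    (r1 : a * b * g = a * g * a) (r2 : a * g * a = g * a * b) :
    a * ((g + c • (b * (1 + g))) * a) = (a * b) * (g + c • (b * (1 + g))) := by
  have s0 : a * (g * a) = g * (a * b) := by rw [← mul_assoc, r2, mul_assoc]
  have s0x : ∀ x : A, a * (g * (a * x)) = g * (a * (b * x)) := by
    intro x
    calc a * (g * (a * x)) = (a * (g * a)) * x := by simp only [mul_assoc]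
      _ = (g * (a * b)) * x := by rw [s0]
      _ = g * (a * (b * x)) := by simp only [mul_assoc]
  have s2 : a * (b * g) = g * (a * b) := by
    rw [← mul_assoc, r1, mul_assoc, s0]
  have s2x : ∀ x : A, a * (b * (g * x)) = g * (a * (b * x)) := by
    intro x
    calc a * (b * (g * x)) = (a * (b * g)) * x := by simp only [mul_assoc]
      _ = (g * (a * b)) * x := by rw [s2]
      _ = g * (a * (b * x)) := by simp only [mul_assoc]
  have habx : ∀ x : A, b * (a * x) = a * (b * x) := by
    intro x; rw [← mul_assoc, hab, mul_assoc]
  have haax : ∀ x : A, a * (a * x) = a * x := by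
    intro x; rw [← mul_assoc, haa]
  have hbbx : ∀ x : A, b * (b * x) = b * x := by
    intro x; rw [← mul_assoc, hbb]
  simp only [mul_add, add_mul, mul_one, one_mul, smul_add, mul_smul_comm,
    smul_mul_assoc, smul_smul, mul_assoc, s2x, s2, s0x, s0, habx, hab, haax, haa,
    hbbx, hbb]

end Generic

/-! ### Relations in `BT n` -/

section Rels
variable {n : ℕ}

lemma btr {x y : FreeAlgebra Kv (Fin n ⊕ Fin n)} (h : BTRel n x y) :
    RingQuot.mkAlgHom Kv (BTRel n) x = RingQuot.mkAlgHom Kv (BTRel n) y :=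
  RingQuot.mkAlgHom_rel Kv h

lemma Rgg {i j : Fin n} (h : 2 ≤ Nat.dist i j) : bg n i * bg n j = bg n j * bg n i := by
  simpa [bg, map_mul] using btr (BTRel.gg_comm i j h)

lemma Reg {i j : Fin n} (h : 2 ≤ Nat.dist i j) : be n i * bg n j = bg n j * be n i := by
  simpa [bg, be, map_mul] using btr (BTRel.eg_comm i j h)

lemma Rbr {i j : Fin n} (h : Nat.dist i j = 1) :
    bg n i * bg n j * bg n i = bg n j * bg n i * bg n j := by
  simpa [bg, map_mul] using btr (BTRel.braid i j h)

lemma Regg {i j : Fin n} (h : Nat.dist i j = 1) :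
    be n i * bg n j * bg n i = bg n j * bg n i * be n j := by
  simpa [bg, be, map_mul] using btr (BTRel.egg i j h)

lemma Ree (i j : Fin n) : be n i * be n j = be n j * be n i := by
  simpa [be, map_mul] using btr (BTRel.ee_comm i j)

lemma Rid (i : Fin n) : be n i * be n i = be n i := by
  simpa [be, map_mul] using btr (BTRel.e_idem i)

lemma Res (i : Fin n) : be n i * bg n i = bg n i * be n i := by
  simpa [bg, be, map_mul] using btr (BTRel.eg_same i)

lemma R1 {i j : Fin n} (h : Nat.dist i j = 1) :
    be n i * be n j * bg n j = be n i * bg n j * be n i := by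
  simpa [bg, be, map_mul] using btr (BTRel.eeg₁ i j h)

lemma R2 {i j : Fin n} (h : Nat.dist i j = 1) :
    be n i * bg n j * be n i = bg n j * be n i * be n j := by
  simpa [bg, be, map_mul] using btr (BTRel.eeg₂ i j h)

lemma Rq (i : Fin n) :
    bg n i * bg n i = 1 + (vv ^ 2 - 1) • (be n i * (1 + bg n i)) := by
  simpa [bg, be, map_mul, map_add, map_one, map_smul] using btr (BTRel.quad i)

end Rels

/-! ### The inverse of `g_i` -/

/-- `Gb n i` is `g_i⁻¹ = g_i + (v⁻² − 1) e_i (1 + g_i)`. -/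
noncomputable def Gb (n : ℕ) (i : Fin n) : BT n :=
  bg n i + ((vv⁻¹) ^ 2 - 1) • (be n i * (1 + bg n i))

section Inv
variable {n : ℕ}

lemma g_mul_Gb (i : Fin n) : bg n i * Gb n i = 1 :=
  L_inv1 (be n i) (bg n i) _ _ (Rq i) (Res i) (Rid i) hs_main

lemma Gb_mul_g (i : Fin n) : Gb n i * bg n i = 1 :=
  L_inv2 (be n i) (bg n i) _ _ (Rq i) (Res i) (Rid i) hs_main

lemma g_Gb_cancel (i : Fin n) (x : BT n) : bg n i * (Gb n i * x) = x := by
  rw [← mul_assoc, g_mul_Gb, one_mul]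

lemma Gb_g_cancel (i : Fin n) (x : BT n) : Gb n i * (bg n i * x) = x := by
  rw [← mul_assoc, Gb_mul_g, one_mul]

lemma Gb_invol (i : Fin n) :
    Gb n i + (vv ^ 2 - 1) • (be n i * (1 + Gb n i)) = bg n i :=
  L_invol (be n i) (bg n i) _ _ (Rid i) hs_main

lemma Gb_quad (i : Fin n) :
    Gb n i * Gb n i = 1 + ((vv⁻¹) ^ 2 - 1) • (be n i * (1 + Gb n i)) :=
  L_quad (be n i) (bg n i) _ _ (Rq i) (Res i) (Rid i) hs_main

lemma eeg_key {i j : Fin n} (h : Nat.dist i j = 1) :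
    be n i * (Gb n j * be n i) = (be n i * be n j) * Gb n j :=
  L_eegkey (be n i) (be n j) (bg n j) _ (Rid i) (Rid j) (Ree j i) (R1 h) (R2 h)

lemma ee_comm_Gb {i j : Fin n} (h : Nat.dist i j = 1) :
    (be n i * be n j) * Gb n j = Gb n j * (be n i * be n j) := by
  apply btCommInv (g_mul_Gb j) (Gb_mul_g j)
  calc be n i * be n j * bg n j = be n i * bg n j * be n i := R1 h
    _ = bg n j * (be n i * be n j) := by rw [R2 h, mul_assoc]

end Inv

/-! ### The bar map on the free algebra -/

noncomputable def barGen (n : ℕ) : Fin n ⊕ Fin n → BT n := Sum.elim (Gb n) (be n)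

noncomputable def Fhom (n : ℕ) : FreeAlgebra Kv (Fin n ⊕ Fin n) →+* BT n :=
  (MonoidAlgebra.liftNCRingHom ((algebraMap Kv (BT n)).comp tau.toAlgHom.toRingHom)
      (FreeMonoid.lift (barGen n)) (fun p w => (Algebra.commutes (tau p) _))).comp
    (FreeAlgebra.equivMonoidAlgebraFreeMonoid (R := Kv)
      (X := Fin n ⊕ Fin n)).toAlgHom.toRingHom

lemma Fhom_ι (n : ℕ) (s : Fin n ⊕ Fin n) :
    Fhom n (FreeAlgebra.ι Kv s) = barGen n s := by
  simp [Fhom, FreeAlgebra.equivMonoidAlgebraFreeMonoid, MonoidAlgebra.liftNCRingHom,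
    MonoidAlgebra.of_apply, MonoidAlgebra.liftNC_single]

lemma Fhom_alg (n : ℕ) (p : Kv) :
    Fhom n (algebraMap Kv _ p) = algebraMap Kv (BT n) (tau p) := by
  simp [Fhom, MonoidAlgebra.liftNCRingHom, MonoidAlgebra.coe_algebraMap,
    MonoidAlgebra.liftNC_single]

lemma Fhom_smul (n : ℕ) (p : Kv) (x : FreeAlgebra Kv (Fin n ⊕ Fin n)) :
    Fhom n (p • x) = tau p • Fhom n x := by
  rw [Algebra.smul_def, map_mul, Fhom_alg, ← Algebra.smul_def]

lemma Fhom_g (n : ℕ) (i : Fin n) : Fhom n (bgF n i) = Gb n i := Fhom_ι n _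
lemma Fhom_e (n : ℕ) (i : Fin n) : Fhom n (beF n i) = be n i := Fhom_ι n _

/-! ### `Fhom` respects the relations -/

lemma Fhom_rel (n : ℕ) : ∀ ⦃x y⦄, BTRel n x y → Fhom n x = Fhom n y := by
  intro x y h
  induction h with
  | gg_comm i j h =>
    simp only [map_mul, Fhom_g]
    have comm := Rgg h
    symm
    apply btInvUnique (m := bg n j * bg n i)
    · simp [mul_assoc, Gb_g_cancel, Gb_mul_g]
    · simp [mul_assoc, g_Gb_cancel, g_mul_Gb]
    · rw [← comm]
      simp [mul_assoc, Gb_g_cancel, Gb_mul_g]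
  | eg_comm i j h =>
    simp only [map_mul, Fhom_g, Fhom_e]
    exact btCommInv (g_mul_Gb j) (Gb_mul_g j) (Reg h)
  | braid i j h =>
    simp only [map_mul, Fhom_g]
    symm
    apply btInvUnique (m := bg n i * bg n j * bg n i)
    · simp [mul_assoc, Gb_g_cancel, Gb_mul_g]
    · simp [mul_assoc, g_Gb_cancel, g_mul_Gb]
    · rw [Rbr h]
      simp [mul_assoc, Gb_g_cancel, Gb_mul_g]
  | egg i j h =>
    simp only [map_mul, Fhom_g, Fhom_e]
    have hji : Nat.dist (j : ℕ) i = 1 := by rwa [Nat.dist_comm]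
    have key' : be n j * (bg n i * bg n j) = bg n i * (bg n j * be n i) := by
      simpa [mul_assoc] using Regg hji
    apply btCancel (g_mul_Gb i)
    apply btCancel (g_mul_Gb j)
    simp only [mul_assoc, key', Gb_g_cancel, Gb_mul_g, mul_one]
  | ee_comm i j =>
    simp only [map_mul, Fhom_e]; exact Ree i j
  | e_idem i =>
    simp only [map_mul, Fhom_e]; exact Rid i
  | eg_same i =>
    simp only [map_mul, Fhom_g, Fhom_e]
    exact btCommInv (g_mul_Gb i) (Gb_mul_g i) (Res i)
  | eeg₁ i j h =>
    simp only [map_mul, Fhom_g, Fhom_e]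
    conv_rhs => rw [mul_assoc]
    rw [eeg_key h]
  | eeg₂ i j h =>
    simp only [map_mul, Fhom_g, Fhom_e]
    rw [mul_assoc, eeg_key h, ee_comm_Gb h, ← mul_assoc]
  | quad i =>
    simp only [map_mul, map_add, map_one, Fhom_smul, Fhom_g, Fhom_e, tau_c]
    exact Gb_quad i

/-! ### The bar involution on `BT n` -/

noncomputable def sig0 (n : ℕ) : BT n →+* BT n :=
  RingQuot.lift ⟨Fhom n, fun _ _ h => Fhom_rel n h⟩

lemma mk_eq (n : ℕ) (x : FreeAlgebra Kv (Fin n ⊕ Fin n)) :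
    RingQuot.mkAlgHom Kv (BTRel n) x = RingQuot.mkRingHom (BTRel n) x := by
  rw [← RingQuot.mkAlgHom_coe Kv]; rfl

lemma sig0_mk (n : ℕ) (x : FreeAlgebra Kv (Fin n ⊕ Fin n)) :
    sig0 n (RingQuot.mkAlgHom Kv (BTRel n) x) = Fhom n x := by
  rw [mk_eq, sig0, RingQuot.lift_mkRingHom_apply]

lemma sig0_g (n : ℕ) (i : Fin n) : sig0 n (bg n i) = Gb n i := by
  rw [bg, sig0_mk, Fhom_g]

lemma sig0_e (n : ℕ) (i : Fin n) : sig0 n (be n i) = be n i := by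
  conv_lhs => rw [be]
  rw [sig0_mk, Fhom_e]

lemma sig0_alg (n : ℕ) (p : Kv) :
    sig0 n (algebraMap Kv (BT n) p) = algebraMap Kv (BT n) (tau p) := by
  rw [← (RingQuot.mkAlgHom Kv (BTRel n)).commutes p, sig0_mk, Fhom_alg]

lemma sig0_smul (n : ℕ) (p : Kv) (x : BT n) :
    sig0 n (p • x) = tau p • sig0 n x := by
  rw [Algebra.smul_def, map_mul, sig0_alg, ← Algebra.smul_def]

lemma sig0_Gb (n : ℕ) (i : Fin n) : sig0 n (Gb n i) = bg n i := by
  have : sig0 n (Gb n i)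
      = Gb n i + (vv ^ 2 - 1) • (be n i * (1 + Gb n i)) := by
    simp only [Gb, map_add, sig0_smul, map_mul, map_one, sig0_g, sig0_e, tau_cinv]
  rw [this, Gb_invol]

lemma sig0_sig0 (n : ℕ) (x : BT n) : sig0 n (sig0 n x) = x := by
  obtain ⟨y, rfl⟩ := RingQuot.mkAlgHom_surjective Kv (BTRel n) x
  induction y using FreeAlgebra.induction with
  | grade0 p =>
    rw [(RingQuot.mkAlgHom Kv (BTRel n)).commutes p, sig0_alg, sig0_alg, tau_tau]
  | grade1 s =>
    cases s with
    | inl i =>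
      show sig0 n (sig0 n (bg n i)) = bg n i
      rw [sig0_g, sig0_Gb]
    | inr i =>
      show sig0 n (sig0 n (be n i)) = be n i
      rw [sig0_e, sig0_e]
  | mul a b ha hb => rw [map_mul, map_mul, map_mul, ha, hb]
  | add a b ha hb => rw [map_add, map_add, map_add, ha, hb]

noncomputable def sigmaEquiv (n : ℕ) : BT n ≃+* BT n where
  toFun := sig0 n
  invFun := sig0 n
  left_inv := sig0_sig0 n
  right_inv := sig0_sig0 n
  map_mul' := map_mul (sig0 n)
  map_add' := map_add (sig0 n)

/-- There is a ring automorphism `σ` of `ℰ_n(v)` with `σ(e_i) = e_i`,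
`σ(g_i) = g_i^{-1}` (two-sided inverse), which is semilinear over the `ℂ`-algebra
automorphism `τ` of `ℂ(v)` sending `v` to `v⁻¹`. -/
theorem bar_involution_exists (n : ℕ) (hn : 1 ≤ n) :
    ∃ τ : Kv ≃ₐ[ℂ] Kv, τ vv = vv⁻¹ ∧
      ∃ σ : BT n ≃+* BT n,
        (∀ i, σ (be n i) = be n i) ∧
        (∀ i, σ (bg n i) * bg n i = 1 ∧ bg n i * σ (bg n i) = 1) ∧
        (∀ (p : Kv) (x : BT n), σ (p • x) = τ p • σ x) := by
  refine ⟨tau, tau_X, sigmaEquiv n, fun i => sig0_e n i, fun i => ?_, fun p x => sig0_smul n p x⟩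
  have hg : sigmaEquiv n (bg n i) = Gb n i := sig0_g n i
  rw [hg]
  exact ⟨Gb_mul_g i, g_mul_Gb i⟩
end
end

section
/- In the Yokonuma–Hecke algebra Y, Juyumaya's generators satisfy the quadratic relation L_i² = 1 − Q^{-1}(E_i − L_iE_i) for every i. -/
noncomputable section

/-- The product-of-coordinates homomorphism `(Fin m → Fˣ) →* Fˣ`. -/
def prodHom (m : ℕ) (F : Type*) [Field F] : (Fin m → Fˣ) →* Fˣ :=
  MonoidHom.mk' (fun f => ∏ i, f i) (by
    intro a b
    simp [Finset.prod_mul_distrib])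

/-- The diagonal torus `T` of `SL_{n+1}(F)`: tuples in `Fˣ` with product `1`,
as a subgroup of `Fin (n+1) → Fˣ`. -/
def TGrp (n : ℕ) (F : Type*) [Field F] : Subgroup (Fin (n + 1) → Fˣ) :=
  (prodHom (n + 1) F).ker

/-- The action of the adjacent transposition `s_i` on the diagonal torus, exchanging
the `i`-th and `(i+1)`-st diagonal entries. -/
def sAct {n : ℕ} {F : Type*} [Field F] (i : Fin n) (t : TGrp n F) : TGrp n F :=
  ⟨fun j => t.1 (Equiv.swap i.castSucc i.succ j), by
    have h : ∏ j, t.1 j = 1 := t.2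
    have := Equiv.prod_comp (Equiv.swap i.castSucc i.succ) t.1
    simp only [TGrp, MonoidHom.mem_ker, prodHom, MonoidHom.mk'_apply]
    rw [this, h]⟩

/-- `h_i(r)`: the diagonal matrix with `r` in position `i`, `r⁻¹` in position `i+1`,
and `1` elsewhere. -/
def hElem {n : ℕ} {F : Type*} [Field F] [DecidableEq F] (i : Fin n) (r : Fˣ) :
    TGrp n F :=
  ⟨Pi.mulSingle i.castSucc r * Pi.mulSingle i.succ r⁻¹, by
    simp only [TGrp, MonoidHom.mem_ker, prodHom, MonoidHom.mk'_apply, Pi.mul_apply,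
      Finset.prod_mul_distrib]
    rw [Finset.prod_pi_mulSingle', Finset.prod_pi_mulSingle']
    simp⟩

/-- The generator `R_i` in the free algebra, for `i` a simple reflection. -/
def yR (n : ℕ) (F : Type*) [Field F] (i : Fin n) :
    FreeAlgebra ℂ (Fin n ⊕ ↥(TGrp n F)) :=
  FreeAlgebra.ι ℂ (Sum.inl i)

/-- The generator `R_t` in the free algebra, for `t` in the diagonal torus. -/
def yT (n : ℕ) (F : Type*) [Field F] (t : TGrp n F) :
    FreeAlgebra ℂ (Fin n ⊕ ↥(TGrp n F)) :=
  FreeAlgebra.ι ℂ (Sum.inr t)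

/-- Defining relations of the Yokonuma–Hecke algebra, with `Q = |F|`,
`H_i(r) = R_{h_i(r)}` and `E_i = Σ_{r ∈ F^×} H_i(r)`. -/
inductive YRel (n : ℕ) (F : Type*) [Field F] [Fintype F] [DecidableEq F] :
    FreeAlgebra ℂ (Fin n ⊕ ↥(TGrp n F)) → FreeAlgebra ℂ (Fin n ⊕ ↥(TGrp n F)) → Prop
  | comm (i j : Fin n) (h : 2 ≤ Nat.dist i j) :
      YRel n F (yR n F i * yR n F j) (yR n F j * yR n F i)
  | braid (i j : Fin n) (h : Nat.dist i j = 1) :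
      YRel n F (yR n F i * yR n F j * yR n F i) (yR n F j * yR n F i * yR n F j)
  | t_comm (t : TGrp n F) (i : Fin n) :
      YRel n F (yT n F t * yR n F i) (yR n F i * yT n F (sAct i t))
  | t_mul (t t' : TGrp n F) :
      YRel n F (yT n F t * yT n F t') (yT n F (t * t'))
  | t_one : YRel n F (yT n F 1) 1
  | quad (i : Fin n) :
      YRel n F (yR n F i * yR n F i)
        ((Fintype.card F : ℂ) • yT n F (hElem i (-1)) +
          yR n F i * ∑ r : Fˣ, yT n F (hElem i r))

/-- The Yokonuma–Hecke algebra `Y`. -/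
abbrev Yok (n : ℕ) (F : Type*) [Field F] [Fintype F] [DecidableEq F] :=
  RingQuot (YRel n F)

/-- The standard generator `R_i` of `Y`. -/
noncomputable def yokR (n : ℕ) (F : Type*) [Field F] [Fintype F] [DecidableEq F]
    (i : Fin n) : Yok n F :=
  RingQuot.mkAlgHom ℂ (YRel n F) (yR n F i)

/-- The standard generator `R_t` of `Y`. -/
noncomputable def yokT (n : ℕ) (F : Type*) [Field F] [Fintype F] [DecidableEq F]
    (t : TGrp n F) : Yok n F :=
  RingQuot.mkAlgHom ℂ (YRel n F) (yT n F t)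

/-- `E_i = Σ_{r ∈ F^×} H_i(r) ∈ Y`, where `H_i(r) = R_{h_i(r)}`. -/
noncomputable def yokE (n : ℕ) (F : Type*) [Field F] [Fintype F] [DecidableEq F]
    (i : Fin n) : Yok n F :=
  ∑ r : Fˣ, yokT n F (hElem i r)

/-- Juyumaya's generator `L_i = Q⁻¹(E_i + R_i Ψ_i)`, where
`Ψ_i = Σ_{r ∈ F^×} ψ(r) H_i(r)`. -/
noncomputable def yokL (n : ℕ) (F : Type*) [Field F] [Fintype F] [DecidableEq F]
    (ψ : F → ℂ) (i : Fin n) : Yok n F :=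
  (Fintype.card F : ℂ)⁻¹ •
    (yokE n F i + yokR n F i * ∑ r : Fˣ, ψ (r : F) • yokT n F (hElem i r))


section Aux

variable {n : ℕ} {F : Type} [Field F] [Fintype F] [DecidableEq F]

lemma hElem_mul (i : Fin n) (r s : Fˣ) :
    hElem (F := F) i r * hElem i s = hElem i (r * s) := by
  apply Subtype.ext
  funext j
  have hne : i.castSucc ≠ i.succ := (Fin.castSucc_lt_succ : i.castSucc < i.succ).ne
  simp only [hElem, Subgroup.coe_mul, Pi.mul_apply, Pi.mulSingle_apply, mul_inv_rev]
  split_ifs with h1 h2 h2 <;> simp_all [mul_comm]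

lemma hElem_one (i : Fin n) : hElem (F := F) i 1 = 1 := by
  apply Subtype.ext
  simp [hElem]

lemma sAct_hElem (i : Fin n) (r : Fˣ) :
    sAct i (hElem (F := F) i r) = hElem i r⁻¹ := by
  apply Subtype.ext
  funext j
  have hne : i.castSucc ≠ i.succ := (Fin.castSucc_lt_succ : i.castSucc < i.succ).ne
  simp only [sAct, hElem, Pi.mul_apply, Pi.mulSingle_apply, Equiv.swap_apply_def]
  split_ifs <;> simp_all

lemma yokT_mul (t t' : TGrp n F) :
    yokT n F t * yokT n F t' = yokT n F (t * t') := by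
  unfold yokT
  rw [← map_mul]
  exact RingQuot.mkAlgHom_rel ℂ (YRel.t_mul t t')

lemma yokT_one : yokT n F 1 = 1 :=
  (RingQuot.mkAlgHom_rel ℂ YRel.t_one).trans (map_one _)

lemma yokT_comm (t : TGrp n F) (i : Fin n) :
    yokT n F t * yokR n F i = yokR n F i * yokT n F (sAct i t) := by
  unfold yokT yokR
  rw [← map_mul, ← map_mul]
  exact RingQuot.mkAlgHom_rel ℂ (YRel.t_comm t i)

lemma yok_quad (i : Fin n) :
    yokR n F i * yokR n F i =
      (Fintype.card F : ℂ) • yokT n F (hElem i (-1)) + yokR n F i * yokE n F i := by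
  unfold yokT yokR yokE
  rw [← map_mul]
  have := RingQuot.mkAlgHom_rel ℂ (YRel.quad (F := F) i)
  rw [this]
  simp [yokT, map_sum, Finset.mul_sum]


section Psi
variable {F : Type} [Field F] [Fintype F] [DecidableEq F]
variable (ψ : F → ℂ) (hadd : ∀ a b, ψ (a + b) = ψ a * ψ b) (hne : ∀ a, ψ a ≠ 0)

include hadd hne in
lemma psi_zero : ψ 0 = 1 := by
  have h : ψ 0 * ψ 0 = ψ 0 * 1 := by rw [← hadd, add_zero, mul_one]
  exact mul_left_cancel₀ (hne 0) h

include hadd in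
lemma psi_sum_zero (hnt : ∃ a, ψ a ≠ 1) : ∑ x : F, ψ x = 0 := by
  obtain ⟨a, ha⟩ := hnt
  have h : (∑ x : F, ψ x) * ψ a = ∑ x : F, ψ x := by
    rw [Finset.sum_mul]
    simp_rw [← hadd]
    exact Fintype.sum_equiv (Equiv.addRight a) _ _ (fun x => rfl)
  by_contra hS
  exact ha (mul_left_cancel₀ hS (h.trans (mul_one _).symm))

include hadd hne in
lemma psi_units_sum (hnt : ∃ a, ψ a ≠ 1) : ∑ r : Fˣ, ψ (r : F) = -1 := by
  have hA : ∑ r : Fˣ, ψ (r : F) = ∑ a : {x : F // x ≠ 0}, ψ (a : F) :=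
    Fintype.sum_equiv unitsEquivNeZero _ _ (fun r => rfl)
  have hB : ∑ x ∈ Finset.univ.erase (0 : F), ψ x = ∑ a : {x : F // x ≠ 0}, ψ (a : F) :=
    Finset.sum_subtype _ (by simp) _
  rw [hA, ← hB, Finset.sum_erase_eq_sub (Finset.mem_univ _), psi_sum_zero ψ hadd hnt,
    psi_zero ψ hadd hne, zero_sub]

include hadd hne in
lemma psi_mul_unit (hnt : ∃ a, ψ a ≠ 1) (v : F) (hv : v ≠ 0) :
    ∑ r : Fˣ, ψ ((r : F) * v) = -1 := by
  have := Fintype.sum_equiv (Equiv.mulRight (Units.mk0 v hv))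
    (fun r : Fˣ => ψ ((r : F) * v)) (fun r : Fˣ => ψ (r : F)) (fun x => by simp)
  rw [this, psi_units_sum ψ hadd hne hnt]

include hadd hne in
lemma psi_inv_mul_unit (hnt : ∃ a, ψ a ≠ 1) (v : F) (hv : v ≠ 0) :
    ∑ r : Fˣ, ψ ((r : F)⁻¹ * v) = -1 := by
  have := Fintype.sum_equiv (Equiv.inv Fˣ)
    (fun r : Fˣ => ψ ((r : F)⁻¹ * v)) (fun r : Fˣ => ψ ((r : F) * v)) (fun x => by simp)
  rw [this, psi_mul_unit ψ hadd hne hnt v hv]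

end Psi

end Aux

/-- In the Yokonuma–Hecke algebra, Juyumaya's generators satisfy the
quadratic relation `L_i² = 1 − Q⁻¹(E_i − L_i E_i)`. -/
theorem juyumaya_quadratic_relation (n : ℕ) (hn : 1 ≤ n)
    (F : Type) [Field F] [Fintype F] [DecidableEq F]
    (ψ : F → ℂ) (hψadd : ∀ a b, ψ (a + b) = ψ a * ψ b)
    (hψne : ∀ a, ψ a ≠ 0) (hψnt : ∃ a, ψ a ≠ 1)
    (i : Fin n) :
    yokL n F ψ i ^ 2 =
      1 - (Fintype.card F : ℂ)⁻¹ • (yokE n F i - yokL n F ψ i * yokE n F i) := by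
  classical
  set Q : ℂ := (Fintype.card F : ℂ) with hQdef
  have hQ0 : Q ≠ 0 := Nat.cast_ne_zero.mpr Fintype.card_ne_zero
  set R : Yok n F := yokR n F i with hR
  set H : Fˣ → Yok n F := fun r => yokT n F (hElem i r) with hHdef
  have HH : ∀ r s : Fˣ, H r * H s = H (r * s) := fun r s => by
    show yokT n F _ * yokT n F _ = yokT n F _
    rw [yokT_mul, hElem_mul]
  have H1 : H 1 = 1 := by
    show yokT n F _ = 1
    rw [hElem_one, yokT_one]
  have HR : ∀ r : Fˣ, H r * R = R * H r⁻¹ := fun r => by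
    show yokT n F _ * yokR n F i = yokR n F i * yokT n F _
    rw [yokT_comm, sAct_hElem]
  set E : Yok n F := yokE n F i with hEdef
  have hE : E = ∑ r : Fˣ, H r := rfl
  have EH : ∀ s : Fˣ, E * H s = E := by
    intro s
    rw [hE, Finset.sum_mul]
    simp_rw [HH]
    exact Fintype.sum_equiv (Equiv.mulRight s) _ _ (fun r => rfl)
  have HE : ∀ s : Fˣ, H s * E = E := by
    intro s
    rw [hE, Finset.mul_sum]
    simp_rw [HH]
    exact Fintype.sum_equiv (Equiv.mulLeft s) _ _ (fun r => rfl)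
  have ER : E * R = R * E := by
    rw [hE, Finset.sum_mul]
    simp_rw [HR]
    rw [← Finset.mul_sum]
    congr 1
    exact Fintype.sum_equiv (Equiv.inv Fˣ) _ _ (fun r => rfl)
  set Ψ : Yok n F := ∑ r : Fˣ, ψ (r : F) • H r with hΨ
  set Ψ' : Yok n F := ∑ r : Fˣ, ψ ((r : F)⁻¹) • H r with hΨ'
  have hL : yokL n F ψ i = Q⁻¹ • (E + R * Ψ) := rfl
  have hcard : ((Fintype.card Fˣ : ℕ) : ℂ) = Q - 1 := by
    rw [Fintype.card_units, Nat.cast_sub Fintype.card_pos, Nat.cast_one]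
  have hψsum : ∑ r : Fˣ, ψ (r : F) = -1 := psi_units_sum ψ hψadd hψne hψnt
  have hψsuminv : ∑ r : Fˣ, ψ ((r : F)⁻¹) = -1 := by
    have := Fintype.sum_equiv (Equiv.inv Fˣ)
      (fun r : Fˣ => ψ ((r : F)⁻¹)) (fun r : Fˣ => ψ (r : F)) (fun x => by simp)
    rw [this, hψsum]
  have ΨE : Ψ * E = -E := by
    rw [hΨ, Finset.sum_mul]
    simp_rw [smul_mul_assoc, HE]
    rw [← Finset.sum_smul, hψsum, neg_smul, one_smul]
  have EΨ : E * Ψ = -E := by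
    rw [hΨ, Finset.mul_sum]
    simp_rw [mul_smul_comm, EH]
    rw [← Finset.sum_smul, hψsum, neg_smul, one_smul]
  have ΨR : Ψ * R = R * Ψ' := by
    rw [hΨ, hΨ', Finset.sum_mul, Finset.mul_sum]
    simp_rw [smul_mul_assoc, HR, mul_smul_comm]
    exact Fintype.sum_equiv (Equiv.inv Fˣ) _ _ (fun x => by simp)
  have coef : ∀ u : Fˣ, (∑ r : Fˣ, ψ ((r : F)⁻¹) * ψ (((r⁻¹ * u : Fˣ) : F))) =
      if u = -1 then Q - 1 else -1 := by
    intro u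
    have hterm : ∀ r : Fˣ, ψ ((r : F)⁻¹) * ψ (((r⁻¹ * u : Fˣ) : F)) =
        ψ ((r : F)⁻¹ * (1 + (u : F))) := by
      intro r
      rw [← hψadd]
      congr 1
      simp [mul_add]
    simp_rw [hterm]
    by_cases hu : u = -1
    · subst hu
      have h0 : ∀ r : Fˣ, ψ ((r : F)⁻¹ * (1 + ((-1 : Fˣ) : F))) = 1 := by
        intro r
        have : (1 + ((-1 : Fˣ) : F)) = 0 := by simp
        rw [this, mul_zero, psi_zero ψ hψadd hψne]
      simp_rw [h0]
      rw [Finset.sum_const, Finset.card_univ, nsmul_eq_mul, mul_one, hcard]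
      simp
    · have hv : (1 + (u : F)) ≠ 0 := by
        intro h
        apply hu
        have : (u : F) = -1 := by linear_combination h
        ext
        simpa using this
      rw [psi_inv_mul_unit ψ hψadd hψne hψnt _ hv, if_neg hu]
  have ΨΨ' : Ψ' * Ψ = Q • H (-1) - E := by
    rw [hΨ', hΨ, Finset.sum_mul]
    simp_rw [Finset.mul_sum, smul_mul_assoc, mul_smul_comm, smul_smul, HH]
    have reidx : ∀ r : Fˣ, (∑ s : Fˣ, (ψ ((r : F)⁻¹) * ψ ((s : F))) • H (r * s)) =
        ∑ u : Fˣ, (ψ ((r : F)⁻¹) * ψ (((r⁻¹ * u : Fˣ) : F))) • H u :=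
      fun r => Fintype.sum_equiv (Equiv.mulLeft r) _ _ (fun s => by simp)
    rw [Finset.sum_congr rfl (fun r _ => reidx r), Finset.sum_comm]
    simp_rw [← Finset.sum_smul]
    rw [Finset.sum_congr rfl (fun u _ => by rw [coef u])]
    have split : ∀ u : Fˣ, ((if u = -1 then Q - 1 else -1 : ℂ)) • H u =
        (if u = -1 then Q • H u else 0) + (-1 : ℂ) • H u := by
      intro u
      split_ifs with h
      · module
      · rw [zero_add]
    rw [Finset.sum_congr rfl (fun u _ => split u), Finset.sum_add_distrib,
      Finset.sum_ite_eq' Finset.univ (-1 : Fˣ) (fun u => Q • H u),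
      if_pos (Finset.mem_univ _)]
    rw [← Finset.smul_sum, ← hE, neg_one_smul, ← sub_eq_add_neg]
  have Rsq : R * R = Q • H (-1) + R * E := by
    simp only [hR, hEdef, hQdef, hHdef]
    exact yok_quad i
  have mneg : ∀ x y : Yok n F, x * -y = -(x * y) := fun x y => mul_neg x y
  have hEE : E * E = (Q - 1) • E := by
    nth_rewrite 1 [hE]
    rw [Finset.sum_mul]
    simp_rw [HE]
    rw [Finset.sum_const, Finset.card_univ, ← Nat.cast_smul_eq_nsmul ℂ, hcard]
  have key : (E + R * Ψ) * (E + R * Ψ) = (Q * Q) • (1 : Yok n F) - E - R * E := by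
    have h1 : E * (R * Ψ) = -(R * E) := by rw [← mul_assoc, ER, mul_assoc, EΨ, mneg]
    have h2 : (R * Ψ) * E = -(R * E) := by rw [mul_assoc, ΨE, mneg]
    have h3 : (R * Ψ) * (R * Ψ) = (Q * Q) • (1 : Yok n F) - Q • E + R * E := by
      have hassoc : Ψ * (R * Ψ) = R * (Ψ' * Ψ) := by rw [← mul_assoc, ΨR, mul_assoc]
      have t1 : (Q • H (-1)) * (Q • H (-1)) = (Q * Q) • (1 : Yok n F) := by
        rw [smul_mul_assoc, mul_smul_comm, smul_smul, HH]
        norm_num [H1]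
      have t2 : (R * E) * (Q • H (-1)) = Q • (R * E) := by
        rw [mul_smul_comm, mul_assoc, EH]
      have t3 : (Q • H (-1)) * E = Q • E := by rw [smul_mul_assoc, HE]
      have t4 : (R * E) * E = (Q - 1) • (R * E) := by rw [mul_assoc, hEE, mul_smul_comm]
      calc (R * Ψ) * (R * Ψ) = R * (Ψ * (R * Ψ)) := by rw [mul_assoc]
        _ = R * (R * (Ψ' * Ψ)) := by rw [hassoc]
        _ = (R * R) * (Ψ' * Ψ) := by rw [mul_assoc]
        _ = (Q • H (-1) + R * E) * (Q • H (-1) - E) := by rw [Rsq, ΨΨ']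
        _ = (Q * Q) • (1 : Yok n F) - Q • E + R * E := by
            rw [mul_sub, add_mul, add_mul, t1, t2, t3, t4]
            module
    rw [mul_add, add_mul, add_mul, hEE, h1, h2, h3]
    module
  have key2 : (E + R * Ψ) * E = (Q - 1) • E - R * E := by
    rw [add_mul, hEE, mul_assoc, ΨE, mneg, ← sub_eq_add_neg]
  rw [pow_two, hL]
  rw [show (Q⁻¹ • (E + R * Ψ)) * (Q⁻¹ • (E + R * Ψ)) =
      (Q⁻¹ * Q⁻¹) • ((E + R * Ψ) * (E + R * Ψ)) from by
    rw [smul_mul_assoc, mul_smul_comm, smul_smul]]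
  rw [key]
  rw [show (Q⁻¹ • (E + R * Ψ)) * E = Q⁻¹ • ((E + R * Ψ) * E) from smul_mul_assoc _ _ _]
  rw [key2]
  match_scalars <;> field_simp <;> ring
end
end
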